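/- Let G be a graph with distinct node weights, z a node, and d ≥ 0. Then IB(N(z)) ⊆ N_d(z) if and only if there is no weight-increasing path entirely contained in G \ {z} from some node in N(z) \ {z} to some node in N_{d+1}(z) \ N_d(z). Consequently, if node weights are i.i.d. from a continuous distribution, the event {IB(N(z)) ⊆ N_d(z)} is independent of the weight W_z. -/

import Mathlib

open MeasureTheory
open scoped ENNReal

variable {V : Type*}

/-- The ball `N_d(z)` : nodes at graph distance at most `d` from `z`. -/
def gball (G : SimpleGraph V) (z : V) (d : ℕ) : Set V :=
  {v | ∃ p : G.Walk z v, p.length ≤ d}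

/-- A weight-increasing path in `G` from `x` to `y` all of whose nodes avoid `z`. -/
def IsIncPathAvoiding (G : SimpleGraph V) (w : V → ℝ) (x y z : V) : Prop :=
  ∃ n : ℕ, ∃ p : Fin (n + 1) → V,
    p 0 = x ∧ p (Fin.last n) = y ∧
    (∀ i : Fin n, G.Adj (p i.castSucc) (p i.succ)) ∧ StrictMono (w ∘ p) ∧
    ∀ i, p i ≠ z

/-- There is a weight-increasing path in `G` from (some node of) `Z` to `v`. -/
def IsIncPathFrom (G : SimpleGraph V) (w : V → ℝ) (Z : Set V) (v : V) : Prop :=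
  ∃ n : ℕ, ∃ p : Fin (n + 1) → V,
    p 0 ∈ Z ∧ p (Fin.last n) = v ∧
    (∀ i : Fin n, G.Adj (p i.castSucc) (p i.succ)) ∧ StrictMono (w ∘ p)

/-- The minimal influence blocking subgraph `IB(Z)`. -/
def IB (G : SimpleGraph V) (w : V → ℝ) (Z : Set V) : Set V :=
  {v | IsIncPathFrom G w Z v}

section Aux

lemma mem_gball_self (G : SimpleGraph V) (z : V) (d : ℕ) : z ∈ gball G z d :=
  ⟨SimpleGraph.Walk.nil, by simp⟩

lemma gball_mono (G : SimpleGraph V) (z : V) {d e : ℕ} (h : d ≤ e) :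
    gball G z d ⊆ gball G z e := fun _ hv => hv.imp fun _ hp => hp.trans h

lemma gball_adj (G : SimpleGraph V) (z : V) {d : ℕ} {u v : V}
    (hu : u ∈ gball G z d) (h : G.Adj u v) : v ∈ gball G z (d + 1) := by
  obtain ⟨p, hp⟩ := hu
  exact ⟨p.concat h, by rw [SimpleGraph.Walk.length_concat]; omega⟩

lemma segment_lemma (G : SimpleGraph V) (z : V) (d : ℕ) (w : V → ℝ) (n : ℕ) (P : ℕ → V)
    (hPadj : ∀ k, k < n → G.Adj (P k) (P (k + 1)))
    (hPmono : ∀ k l, k < l → l ≤ n → w (P k) < w (P l))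
    (s : ℕ) (hs : s ≤ n) (hsball : P s ∈ gball G z 1)
    (havoid : ∀ k, s ≤ k → k ≤ n → P k ≠ z)
    (hvn : P n ∉ gball G z d) :
    ∃ x ∈ gball G z 1 \ {z}, ∃ y ∈ gball G z (d + 1) \ gball G z d,
      IsIncPathAvoiding G w x y z := by
  classical
  have hex : ∃ k, s ≤ k ∧ k ≤ n ∧ P k ∉ gball G z d := ⟨n, hs, le_rfl, hvn⟩
  obtain ⟨hsj, hjn, hjball⟩ := Nat.find_spec hex
  set j := Nat.find hex with hjdef
  have hmin : ∀ k, k < j → s ≤ k → k ≤ n → P k ∈ gball G z d := by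
    intro k hk h1 h2
    by_contra hc
    exact Nat.find_min hex hk ⟨h1, h2, hc⟩
  refine ⟨P s, ⟨hsball, havoid s le_rfl hs⟩, P j, ⟨?_, hjball⟩, ?_⟩
  · rcases eq_or_lt_of_le hsj with h | h
    · rw [← h]
      exact gball_mono G z (by omega) hsball
    · have h1 : P (j - 1) ∈ gball G z d := hmin (j - 1) (by omega) (by omega) (by omega)
      have h2 : G.Adj (P (j - 1)) (P (j - 1 + 1)) := hPadj (j - 1) (by omega)
      have h3 : j - 1 + 1 = j := by omega
      rw [h3] at h2
      exact gball_adj G z h1 h2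
  · refine ⟨j - s, fun k => P (s + (k : ℕ)), by simp, ?_, ?_, ?_, ?_⟩
    · show P (s + (j - s)) = P j
      congr 1
      omega
    · intro i
      have hi : (i : ℕ) < j - s := i.isLt
      have h2 := hPadj (s + (i : ℕ)) (by omega)
      show G.Adj (P (s + (i.castSucc : ℕ))) (P (s + (i.succ : ℕ)))
      rw [Fin.coe_castSucc, Fin.val_succ, ← Nat.add_assoc]
      exact h2
    · intro a b hab
      have hab' : (a : ℕ) < (b : ℕ) := hab
      have hb : (b : ℕ) ≤ j - s := by omega
      exact hPmono (s + (a : ℕ)) (s + (b : ℕ)) (by omega) (by omega)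
    · intro i
      have hi : (i : ℕ) ≤ j - s := by omega
      exact havoid (s + (i : ℕ)) (by omega) (by omega)

lemma part1 (G : SimpleGraph V) (z : V) (d : ℕ) (w : V → ℝ) (hw : Function.Injective w) :
    IB G w (gball G z 1) ⊆ gball G z d ↔
      ¬ ∃ x ∈ gball G z 1 \ {z}, ∃ y ∈ gball G z (d + 1) \ gball G z d,
          IsIncPathAvoiding G w x y z := by
  constructor
  · rintro hsub ⟨x, hx, y, hy, n, p, h0, hl, hadj, hmono, -⟩
    exact hy.2 (hsub ⟨n, p, h0 ▸ hx.1, hl, hadj, hmono⟩)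
  · intro hno v hv
    by_contra hvd
    obtain ⟨n, p, h0, hl, hadj, hmono⟩ := hv
    set P : ℕ → V := fun k => p ⟨min k n, by omega⟩ with hPdef
    have hP : ∀ k, (h : k ≤ n) → P k = p ⟨k, by omega⟩ := by
      intro k h
      simp only [hPdef]
      congr 1
      exact Fin.ext (Nat.min_eq_left h)
    have hPn : P n = v := by
      rw [hP n le_rfl]
      exact hl
    have hPmono : ∀ k l, k < l → l ≤ n → w (P k) < w (P l) := by
      intro k l hkl hln
      rw [hP k (by omega), hP l hln]
      exact hmono (show (⟨k, by omega⟩ : Fin (n + 1)) < ⟨l, by omega⟩ from hkl)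
    have hPadj : ∀ k, k < n → G.Adj (P k) (P (k + 1)) := by
      intro k hk
      rw [hP k (by omega), hP (k + 1) (by omega)]
      exact hadj ⟨k, hk⟩
    have hvd' : P n ∉ gball G z d := by rw [hPn]; exact hvd
    by_cases hocc : ∃ i, i ≤ n ∧ P i = z
    · obtain ⟨i, hin, hiz⟩ := hocc
      have hilt : i < n := by
        rcases lt_or_eq_of_le hin with h | h
        · exact h
        · exfalso
          subst h
          exact hvd' (by rw [hiz]; exact mem_gball_self G z d)
      apply hno
      refine segment_lemma G z d w n P hPadj hPmono (i + 1) hilt ?_ ?_ hvd'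
      · have h2 := hPadj i hilt
        rw [hiz] at h2
        exact ⟨SimpleGraph.Walk.cons h2 SimpleGraph.Walk.nil, by simp⟩
      · intro k h1 h2 hkz
        have h3 := hPmono i k (by omega) h2
        rw [hiz, hkz] at h3
        exact lt_irrefl _ h3
    · push_neg at hocc
      apply hno
      refine segment_lemma G z d w n P hPadj hPmono 0 (by omega) ?_
        (fun k _ h2 => hocc k h2) hvd'
      rw [hP 0 (by omega)]
      exact h0

end Aux


lemma eval_preimage_pi [Fintype V] (ν : Measure ℝ) [IsProbabilityMeasure ν] (i : V) (s : Set ℝ) :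
    Measure.pi (fun _ : V => ν) ((fun w : V → ℝ => w i) ⁻¹' s) = ν s := by
  classical
  have h : ((fun w : V → ℝ => w i) ⁻¹' s)
      = Set.univ.pi (Function.update (fun _ : V => (Set.univ : Set ℝ)) i s) := by
    rw [Set.univ_pi_update_univ]
  rw [h, Measure.pi_pi]
  rw [Finset.prod_eq_single i (fun j _ hj => by simp [Function.update_of_ne hj]) (by simp)]
  simp

lemma pi_iIndep [Fintype V] (ν : Measure ℝ) [IsProbabilityMeasure ν] :
    ProbabilityTheory.iIndepFun
      (fun (i : V) (w : V → ℝ) => w i) (Measure.pi fun _ : V => ν) := by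
  classical
  rw [ProbabilityTheory.iIndepFun_iff_measure_inter_preimage_eq_mul]
  intro S sets _
  have h : (⋂ i ∈ S, (fun w : V → ℝ => w i) ⁻¹' sets i)
      = Set.univ.pi (fun i => if i ∈ S then sets i else Set.univ) := by
    ext w
    simp only [Set.mem_iInter, Set.mem_preimage, Set.mem_pi, Set.mem_univ, true_implies]
    constructor
    · intro h i
      by_cases hi : i ∈ S <;> simp [hi, h]
    · intro h i hi
      have h2 := h i
      rwa [if_pos hi] at h2
  rw [h, Measure.pi_pi]
  have h3 : ∀ i : V, ν (if i ∈ S then sets i else Set.univ) = if i ∈ S then ν (sets i) else 1 := by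
    intro i; by_cases hi : i ∈ S <;> simp [hi]
  simp_rw [h3]
  rw [Finset.prod_ite_mem, Finset.univ_inter]
  exact Finset.prod_congr rfl fun i _ => (eval_preimage_pi ν i (sets i)).symm

lemma ae_injective [Fintype V] (ν : Measure ℝ) [IsProbabilityMeasure ν] [NullSingletonClass ν] :
    ∀ᵐ w ∂(Measure.pi fun _ : V => ν), Function.Injective w := by
  classical
  have hpair : ∀ u v : V, u ≠ v → (Measure.pi fun _ : V => ν) {w : V → ℝ | w u = w v} = 0 := by
    intro u v huv
    have hind := (pi_iIndep (V := V) ν).indepFun huv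
    have hmarg : ∀ i : V, (Measure.pi fun _ : V => ν).map (fun w : V → ℝ => w i) = ν := by
      intro i
      refine Measure.ext fun s hs => ?_
      rw [Measure.map_apply (measurable_pi_apply i) hs, eval_preimage_pi]
    have hmap : (Measure.pi fun _ : V => ν).map (fun w => (w u, w v)) = ν.prod ν := by
      rw [(ProbabilityTheory.indepFun_iff_map_prod_eq_prod_map_map
        (measurable_pi_apply u).aemeasurable (measurable_pi_apply v).aemeasurable).mp hind,
        hmarg u, hmarg v]
    have hdiag : MeasurableSet {p : ℝ × ℝ | p.1 = p.2} :=
      measurableSet_eq_fun measurable_fst measurable_snd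
    have h4 : {w : V → ℝ | w u = w v} = (fun w : V → ℝ => (w u, w v)) ⁻¹' {p | p.1 = p.2} := rfl
    rw [h4, ← Measure.map_apply (by fun_prop) hdiag, hmap, Measure.prod_apply hdiag]
    have h5 : ∀ x : ℝ, ν (Prod.mk x ⁻¹' {p : ℝ × ℝ | p.1 = p.2}) = 0 := by
      intro x
      have : (Prod.mk x ⁻¹' {p : ℝ × ℝ | p.1 = p.2}) = {x} := by ext y; simp [eq_comm]
      rw [this]
      exact measure_singleton x
    simp [h5]
  have hsub : {w : V → ℝ | ¬ Function.Injective w} ⊆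
      ⋃ (p : V × V) (_ : p.1 ≠ p.2), {w : V → ℝ | w p.1 = w p.2} := by
    intro w hw
    simp only [Set.mem_setOf_eq, Function.Injective, not_forall] at hw
    obtain ⟨u, v, h1, h2⟩ := hw
    exact Set.mem_iUnion₂.mpr ⟨(u, v), h2, h1⟩
  have h0 : (Measure.pi fun _ : V => ν)
      (⋃ (p : V × V) (_ : p.1 ≠ p.2), {w : V → ℝ | w p.1 = w p.2}) = 0 :=
    measure_iUnion_null fun p => measure_iUnion_null fun h => hpair p.1 p.2 h
  exact ae_iff.mpr (measure_mono_null hsub h0)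

lemma inc_avoid_congr (G : SimpleGraph V) {w w' : V → ℝ} {x y z : V}
    (h : ∀ v, v ≠ z → w v = w' v) :
    IsIncPathAvoiding G w x y z → IsIncPathAvoiding G w' x y z := by
  rintro ⟨n, p, h0, hl, hadj, hmono, havoid⟩
  refine ⟨n, p, h0, hl, hadj, ?_, havoid⟩
  intro a b hab
  show w' (p a) < w' (p b)
  rw [← h _ (havoid a), ← h _ (havoid b)]
  exact hmono hab

lemma ex_congr (G : SimpleGraph V) (z : V) (d : ℕ) {w w' : V → ℝ}
    (h : ∀ v, v ≠ z → w v = w' v) :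
    (∃ x ∈ gball G z 1 \ {z}, ∃ y ∈ gball G z (d + 1) \ gball G z d,
        IsIncPathAvoiding G w x y z) →
    (∃ x ∈ gball G z 1 \ {z}, ∃ y ∈ gball G z (d + 1) \ gball G z d,
        IsIncPathAvoiding G w' x y z) := by
  rintro ⟨x, hx, y, hy, hp⟩
  exact ⟨x, hx, y, hy, inc_avoid_congr G h hp⟩


/-- `IB(N(z)) ⊆ N_d(z)` iff there is no weight-increasing path avoiding `z` from a node of
`N(z) \ {z}` to a node of `N_{d+1}(z) \ N_d(z)`; consequently, for i.i.d. continuous node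
weights the event `{IB(N(z)) ⊆ N_d(z)}` is independent of the weight `W_z`. -/
theorem IB_ball_characterization_and_independence [Fintype V] (G : SimpleGraph V)
    (z : V) (d : ℕ) (ν : Measure ℝ) [IsProbabilityMeasure ν] [NullSingletonClass ν] :
    (∀ w : V → ℝ, Function.Injective w →
      (IB G w (gball G z 1) ⊆ gball G z d ↔
        ¬ ∃ x ∈ gball G z 1 \ {z}, ∃ y ∈ gball G z (d + 1) \ gball G z d,
            IsIncPathAvoiding G w x y z)) ∧
    ProbabilityTheory.IndepFun (fun w : V → ℝ => w z)
      (Set.indicator {w : V → ℝ | IB G w (gball G z 1) ⊆ gball G z d} fun _ => (1 : ℝ))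
      (Measure.pi fun _ : V => ν) := by
  refine ⟨fun w hw => part1 G z d w hw, ?_⟩
  classical
  set T : Set (V → ℝ) := {w | ¬ ∃ x ∈ gball G z 1 \ {z},
    ∃ y ∈ gball G z (d + 1) \ gball G z d, IsIncPathAvoiding G w x y z} with hT
  set ext : ((({z}ᶜ : Finset V) : Type _) → ℝ) → V → ℝ :=
    fun u v => if h : v = z then 0 else u ⟨v, by simp [h]⟩ with hext
  have hext_meas : ∀ v : V, Measurable fun u : (({z}ᶜ : Finset V) : Type _) → ℝ => ext u v := by
    intro v
    by_cases h : v = z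
    · simp only [hext, h, dif_pos]
      exact measurable_const
    · simp only [hext, dif_neg h]
      exact measurable_pi_apply _
  have hTmeas : MeasurableSet {u : (({z}ᶜ : Finset V) : Type _) → ℝ | ext u ∈ T} := by
    have hrw : {u : (({z}ᶜ : Finset V) : Type _) → ℝ | ext u ∈ T}ᶜ =
        ⋃ (x : V) (y : V) (n : ℕ) (p : Fin (n + 1) → V),
          ({u : (({z}ᶜ : Finset V) : Type _) → ℝ |
              x ∈ gball G z 1 \ {z} ∧ y ∈ gball G z (d + 1) \ gball G z d ∧
              p 0 = x ∧ p (Fin.last n) = y ∧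
              (∀ i : Fin n, G.Adj (p i.castSucc) (p i.succ)) ∧ (∀ i, p i ≠ z)} ∩
            {u | StrictMono fun i => ext u (p i)}) := by
      ext u
      simp only [Set.mem_compl_iff, Set.mem_setOf_eq, hT, not_not, Set.mem_iUnion,
        Set.mem_inter_iff]
      constructor
      · rintro ⟨x, hx, y, hy, n, p, h0, hl, hadj, hmono, havoid⟩
        exact ⟨x, y, n, p, ⟨hx, hy, h0, hl, hadj, havoid⟩, hmono⟩
      · rintro ⟨x, y, n, p, ⟨hx, hy, h0, hl, hadj, havoid⟩, hmono⟩
        exact ⟨x, hx, y, hy, n, p, h0, hl, hadj, hmono, havoid⟩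
    have hc : MeasurableSet {u : (({z}ᶜ : Finset V) : Type _) → ℝ | ext u ∈ T}ᶜ := by
      rw [hrw]
      refine MeasurableSet.iUnion fun x => MeasurableSet.iUnion fun y =>
        MeasurableSet.iUnion fun n => MeasurableSet.iUnion fun p =>
        (MeasurableSet.const _).inter ?_
      have h2 : {u : (({z}ᶜ : Finset V) : Type _) → ℝ | StrictMono fun i => ext u (p i)} =
          ⋂ (a : Fin (n + 1)) (b : Fin (n + 1)) (_ : a < b), {u | ext u (p a) < ext u (p b)} := by
        ext u
        simp only [Set.mem_setOf_eq, Set.mem_iInter]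
        exact ⟨fun h a b hab => h hab, fun h a b hab => h a b hab⟩
      rw [h2]
      exact MeasurableSet.iInter fun a => MeasurableSet.iInter fun b =>
        MeasurableSet.iInter fun _ => measurableSet_lt (hext_meas (p a)) (hext_meas (p b))
    simpa using hc.compl
  have hbase := (pi_iIndep (V := V) ν).indepFun_finset {z} ({z}ᶜ) disjoint_compl_right
    (fun i => measurable_pi_apply i)
  set ψ : ((({z}ᶜ : Finset V) : Type _) → ℝ) → ℝ :=
    Set.indicator {u | ext u ∈ T} (fun _ => 1) with hψ
  have hψm : Measurable ψ := Measurable.indicator measurable_const hTmeas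
  have hφ : Measurable fun u : ((({z} : Finset V)) : Type _) → ℝ =>
      u ⟨z, by simp⟩ := measurable_pi_apply _
  have h2 := hbase.comp hφ hψm
  have he1 : ((fun u : ((({z} : Finset V)) : Type _) → ℝ => u ⟨z, by simp⟩) ∘
      (fun (w : V → ℝ) (i : (({z} : Finset V) : Type _)) => w ↑i)) = fun w : V → ℝ => w z := rfl
  have he2 : (ψ ∘ fun (w : V → ℝ) (i : (({z}ᶜ : Finset V) : Type _)) => w ↑i) =
      Set.indicator T (fun _ => 1) := by
    funext w
    have hag : ∀ v, v ≠ z → ext (fun i : (({z}ᶜ : Finset V) : Type _) => w ↑i) v = w v := by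
      intro v hv
      simp [hext, hv]
    have hmem : ext (fun i : (({z}ᶜ : Finset V) : Type _) => w ↑i) ∈ T ↔ w ∈ T := by
      simp only [hT, Set.mem_setOf_eq]
      exact not_congr ⟨fun h => ex_congr G z d hag h,
        fun h => ex_congr G z d (fun v hv => (hag v hv).symm) h⟩
    show ψ (fun i => w ↑i) = Set.indicator T (fun _ => 1) w
    simp only [hψ, Set.indicator_apply, Set.mem_setOf_eq, hmem]
  rw [he1, he2] at h2
  have hae : (Set.indicator T (fun _ => (1 : ℝ))) =ᵐ[Measure.pi fun _ : V => ν]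
      Set.indicator {w : V → ℝ | IB G w (gball G z 1) ⊆ gball G z d} (fun _ => 1) := by
    filter_upwards [ae_injective (V := V) ν] with w hw
    have hiff : w ∈ T ↔ w ∈ {w : V → ℝ | IB G w (gball G z 1) ⊆ gball G z d} := by
      simp only [hT, Set.mem_setOf_eq]
      exact (part1 G z d w hw).symm
    simp only [Set.indicator_apply, hiff]
  exact ProbabilityTheory.IndepFun.congr h2 Filter.EventuallyEq.rfl hae
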